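/- arXiv:1510.07550 — 4 statements merged into one kernel-verified Lean document; each statement's English description precedes it below -/
import Mathlib

section
/- Let M be a positive integer, Δ = {φ ∈ ℝ^M : φ_i ≥ 0 for all i, Σ_{i=1}^M φ_i = 1} the standard simplex, b > 0, and L : ℝ^M → ℝ a differentiable function that is bounded above on Δ and satisfies |L(x + h) − L(x) − ⟨∇L(x), h⟩| ≤ b‖h‖² whenever x and x + h both lie in Δ. Let φ[1] ∈ Δ and define φ[n+1] = (1 − 1/n)·φ[n] + (1/n)·e_{i_n}, where e_j denotes the j-th standard basis vector and i_n is any index maximizing the partial derivative ∂L/∂φ_i at φ[n] over i ∈ {1,…,M}. Then the sequence (L(φ[n]))_{n≥1} converges. -/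
open Filter

/-- A standard basis vector lies in the standard simplex. -/
lemma single_mem_stdSimplex' (M : ℕ) (j : Fin M) :
    (Pi.single j 1 : Fin M → ℝ) ∈ stdSimplex ℝ (Fin M) := by
  constructor
  · intro k
    by_cases h : k = j <;> simp [Pi.single_apply, h]
  · simp [Pi.single_apply]

/-- Elements of the simplex have sup norm at most 1. -/
lemma norm_le_one_of_mem_stdSimplex {M : ℕ} {x : Fin M → ℝ}
    (hx : x ∈ stdSimplex ℝ (Fin M)) : ‖x‖ ≤ 1 := by
  rw [pi_norm_le_iff_of_nonneg zero_le_one]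
  intro i
  rw [Real.norm_eq_abs, abs_of_nonneg (hx.1 i)]
  calc x i ≤ ∑ j, x j := Finset.single_le_sum (fun j _ => hx.1 j) (Finset.mem_univ i)
    _ = 1 := hx.2

/-- A bounded-above sequence satisfying `a (n+1) ≥ a n - c/(n+1)^2` converges. -/
lemma tendsto_of_almost_mono (a : ℕ → ℝ) (c : ℝ) (hc : 0 ≤ c)
    (hstep : ∀ n : ℕ, a n - c / ((n : ℝ) + 1) ^ 2 ≤ a (n + 1))
    (B : ℝ) (hB : ∀ n, a n ≤ B) :
    ∃ l : ℝ, Tendsto a atTop (nhds l) := by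
  set s : ℕ → ℝ := fun k => c / ((k : ℝ) + 1) ^ 2 with hs
  have hs0 : ∀ k, 0 ≤ s k := fun k => by positivity
  have hsum : Summable s := by
    have h1 : Summable (fun n : ℕ => 1 / (n : ℝ) ^ 2) := by
      simpa using Real.summable_one_div_nat_pow.mpr one_lt_two
    have h2 : Summable (fun n : ℕ => 1 / ((n : ℝ) + 1) ^ 2) := by
      have := (summable_nat_add_iff 1).mpr h1
      simpa [add_comm] using this
    simpa [hs, div_eq_mul_inv, mul_comm] using h2.mul_left c
  set T : ℕ → ℝ := fun k => ∑ j ∈ Finset.range k, s j with hT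
  have hTle : ∀ k, T k ≤ ∑' j, s j := fun k => Summable.sum_le_tsum _ (fun j _ => hs0 j) hsum
  have hTtend : Tendsto T atTop (nhds (∑' j, s j)) := hsum.hasSum.tendsto_sum_nat
  set m : ℕ → ℝ := fun k => a k + T k with hm
  have hmono : Monotone m := by
    apply monotone_nat_of_le_succ
    intro k
    have h1 := hstep k
    have h2 : T (k + 1) = T k + s k := Finset.sum_range_succ _ _
    simp only [hm, h2]
    have : a k ≤ a (k + 1) + s k := by
      have := hstep k
      simp only [hs] at this ⊢
      linarith
    linarith
  have hbdd : BddAbove (Set.range m) := by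
    refine ⟨B + ∑' j, s j, ?_⟩
    rintro x ⟨k, rfl⟩
    exact add_le_add (hB k) (hTle k)
  have hmtend : Tendsto m atTop (nhds (⨆ k, m k)) := tendsto_atTop_ciSup hmono hbdd
  refine ⟨(⨆ k, m k) - ∑' j, s j, ?_⟩
  have : a = fun k => m k - T k := by funext k; simp [hm]
  rw [this]
  exact hmtend.sub hTtend

/-- For a differentiable objective `L`, bounded above on the standard simplex and with a
quadratic Taylor-remainder bound, the greedy online scheduling policy
`φ (n+1) = (1 - 1/n) • φ n + (1/n) • e (i n)` (where `i n` maximizes the partial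
derivative of `L` at `φ n`) produces a convergent sequence of objective values `L (φ n)`. -/
theorem stmt_3 (M : ℕ) (hM : 0 < M) (b : ℝ) (hb : 0 < b)
    (L : (Fin M → ℝ) → ℝ) (hdiff : Differentiable ℝ L)
    (hbdd : BddAbove (L '' stdSimplex ℝ (Fin M)))
    (htaylor : ∀ x h : Fin M → ℝ, x ∈ stdSimplex ℝ (Fin M) →
      x + h ∈ stdSimplex ℝ (Fin M) →
      |L (x + h) - L x - fderiv ℝ L x h| ≤ b * ‖h‖ ^ 2)
    (φ : ℕ → Fin M → ℝ) (hφ1 : φ 1 ∈ stdSimplex ℝ (Fin M))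
    (idx : ℕ → Fin M)
    (hmax : ∀ n : ℕ, 1 ≤ n → ∀ j : Fin M,
      fderiv ℝ L (φ n) (Pi.single j 1) ≤ fderiv ℝ L (φ n) (Pi.single (idx n) 1))
    (hupd : ∀ n : ℕ, 1 ≤ n →
      φ (n + 1) = (1 - 1 / (n : ℝ)) • φ n + (1 / (n : ℝ)) • (Pi.single (idx n) 1 : Fin M → ℝ)) :
    ∃ l : ℝ, Tendsto (fun n => L (φ n)) atTop (nhds l) := by
  -- all iterates stay in the simplex
  have hmem : ∀ n : ℕ, 1 ≤ n → φ n ∈ stdSimplex ℝ (Fin M) := by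
    intro n hn
    induction n with
    | zero => omega
    | succ k ih =>
      rcases Nat.eq_or_lt_of_le hn with h | h
      · exact h ▸ hφ1
      · have hk : 1 ≤ k := by omega
        have hkR : (1 : ℝ) ≤ (k : ℝ) := by exact_mod_cast hk
        have hk0 : (0 : ℝ) < (k : ℝ) := by linarith
        rw [hupd k hk]
        exact (convex_stdSimplex ℝ (Fin M)) (ih hk) (single_mem_stdSimplex' M (idx k))
          (by rw [sub_nonneg]; exact div_le_one_of_le₀ hkR hk0.le)
          (by positivity) (by ring)
  -- key descent estimate
  have hstep : ∀ n : ℕ, 1 ≤ n → L (φ n) - 4 * b / (n : ℝ) ^ 2 ≤ L (φ (n + 1)) := by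
    intro n hn
    have hkR : (1 : ℝ) ≤ (n : ℝ) := by exact_mod_cast hn
    have hk0 : (0 : ℝ) < (n : ℝ) := by linarith
    set x := φ n with hx
    set e : Fin M → ℝ := Pi.single (idx n) 1 with he
    set h : Fin M → ℝ := (1 / (n : ℝ)) • (e - x) with hh
    have hxh : x + h = φ (n + 1) := by
      rw [hupd n hn]
      funext k
      simp only [hh, Pi.add_apply, Pi.smul_apply, Pi.sub_apply, smul_eq_mul]
      ring
    have hxmem := hmem n hn
    have hx1mem : x + h ∈ stdSimplex ℝ (Fin M) := hxh ▸ hmem (n + 1) (by omega)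
    set f := fderiv ℝ L x with hf
    -- gradient of L at x applied to x is at most its value at e
    have hfx : f x ≤ f e := by
      have hxrep : x = ∑ j, x j • (Pi.single j 1 : Fin M → ℝ) := by
        funext k
        simp [Pi.single_apply, Finset.sum_apply, mul_ite]
      calc f x = ∑ j, x j * f (Pi.single j 1) := by
            conv_lhs => rw [hxrep]
            rw [map_sum]
            simp [smul_eq_mul]
        _ ≤ ∑ j, x j * f e := by
            apply Finset.sum_le_sum
            intro j _
            exact mul_le_mul_of_nonneg_left (hmax n hn j) (hxmem.1 j)
        _ = f e := by rw [← Finset.sum_mul, hxmem.2, one_mul]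
    have hfh : 0 ≤ f h := by
      have : f h = (1 / (n : ℝ)) * (f e - f x) := by
        rw [hh, map_smul, map_sub]; simp [smul_eq_mul]
      rw [this]
      have : 0 ≤ f e - f x := by linarith
      positivity
    -- norm bound on h
    have hnorm : ‖h‖ ≤ 2 / (n : ℝ) := by
      have h1 : ‖e - x‖ ≤ 2 := by
        calc ‖e - x‖ ≤ ‖e‖ + ‖x‖ := norm_sub_le _ _
          _ ≤ 1 + 1 := add_le_add
              (norm_le_one_of_mem_stdSimplex (single_mem_stdSimplex' M (idx n)))
              (norm_le_one_of_mem_stdSimplex hxmem)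
          _ = 2 := by norm_num
      calc ‖h‖ = |1 / (n : ℝ)| * ‖e - x‖ := by rw [hh, norm_smul, Real.norm_eq_abs]
        _ = (1 / (n : ℝ)) * ‖e - x‖ := by rw [abs_of_pos (by positivity)]
        _ ≤ (1 / (n : ℝ)) * 2 := by
            apply mul_le_mul_of_nonneg_left h1 (by positivity)
        _ = 2 / (n : ℝ) := by ring
    have htb : |L (x + h) - L x - f h| ≤ b * ‖h‖ ^ 2 := htaylor x h hxmem hx1mem
    have hb2 : b * ‖h‖ ^ 2 ≤ 4 * b / (n : ℝ) ^ 2 := by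
      have : ‖h‖ ^ 2 ≤ (2 / (n : ℝ)) ^ 2 := by
        apply pow_le_pow_left₀ (norm_nonneg h) hnorm
      calc b * ‖h‖ ^ 2 ≤ b * (2 / (n : ℝ)) ^ 2 := by nlinarith
        _ = 4 * b / (n : ℝ) ^ 2 := by field_simp; ring
    have habs := abs_le.mp htb
    rw [hxh] at habs
    linarith [habs.1]
  -- upper bound
  obtain ⟨B, hB⟩ := hbdd
  have hBall : ∀ n : ℕ, 1 ≤ n → L (φ n) ≤ B := fun n hn =>
    hB ⟨φ n, hmem n hn, rfl⟩
  -- apply abstract convergence lemma to the shifted sequence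
  have hcnv : ∃ l : ℝ, Tendsto (fun k => L (φ (k + 1))) atTop (nhds l) := by
    apply tendsto_of_almost_mono (fun k => L (φ (k + 1))) (4 * b) (by positivity)
    · intro k
      have := hstep (k + 1) (by omega)
      push_cast at this ⊢
      convert this using 2
    · intro k
      exact hBall (k + 1) (by omega)
  obtain ⟨l, hl⟩ := hcnv
  exact ⟨l, (tendsto_add_atTop_iff_nat 1).mp hl⟩
end

section
/- Let M be a positive integer, Δ = {φ ∈ ℝ^M : φ_i ≥ 0 for all i, Σ_{i=1}^M φ_i = 1} the standard simplex, b > 0, and L : ℝ^M → ℝ a concave, continuously differentiable function satisfying |L(x + h) − L(x) − ⟨∇L(x), h⟩| ≤ b‖h‖² whenever x and x + h both lie in Δ. Let φ[1] ∈ Δ and define φ[n+1] = (1 − 1/n)·φ[n] + (1/n)·e_{i_n}, where e_j denotes the j-th standard basis vector and i_n is any index maximizing the partial derivative ∂L/∂φ_i at φ[n] over i ∈ {1,…,M}. Then L(φ[n]) converges to max_{φ ∈ Δ} L(φ). -/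
open Filter

set_option maxHeartbeats 2000000 in
/-- For a concave, continuously differentiable objective `L` with a quadratic
Taylor-remainder bound on the standard simplex, the greedy online scheduling policy
`φ (n+1) = (1 - 1/n) • φ n + (1/n) • e (i n)` drives the objective value `L (φ n)`
to the maximum of `L` over the simplex. -/
theorem stmt_4 (M : ℕ) (hM : 0 < M) (b : ℝ) (hb : 0 < b)
    (L : (Fin M → ℝ) → ℝ) (hconc : ConcaveOn ℝ Set.univ L) (hsmooth : ContDiff ℝ 1 L)
    (htaylor : ∀ x h : Fin M → ℝ, x ∈ stdSimplex ℝ (Fin M) →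
      x + h ∈ stdSimplex ℝ (Fin M) →
      |L (x + h) - L x - fderiv ℝ L x h| ≤ b * ‖h‖ ^ 2)
    (φ : ℕ → Fin M → ℝ) (hφ1 : φ 1 ∈ stdSimplex ℝ (Fin M))
    (idx : ℕ → Fin M)
    (hmax : ∀ n : ℕ, 1 ≤ n → ∀ j : Fin M,
      fderiv ℝ L (φ n) (Pi.single j 1) ≤ fderiv ℝ L (φ n) (Pi.single (idx n) 1))
    (hupd : ∀ n : ℕ, 1 ≤ n →
      φ (n + 1) = (1 - 1 / (n : ℝ)) • φ n + (1 / (n : ℝ)) • (Pi.single (idx n) 1 : Fin M → ℝ)) :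
    ∃ m : ℝ, IsGreatest (L '' stdSimplex ℝ (Fin M)) m ∧
      Tendsto (fun n => L (φ n)) atTop (nhds m) := by
  classical
  haveI : Nonempty (Fin M) := Fin.pos_iff_nonempty.mp hM
  have hne : (stdSimplex ℝ (Fin M)).Nonempty :=
    ⟨_, single_mem_stdSimplex ℝ (Classical.arbitrary (Fin M))⟩
  obtain ⟨ψ, hψΔ, hψmax⟩ := (isCompact_stdSimplex ℝ (Fin M)).exists_isMaxOn hne
    hsmooth.continuous.continuousOn
  refine ⟨L ψ, ⟨⟨ψ, hψΔ, rfl⟩, by rintro _ ⟨x, hx, rfl⟩; exact hψmax hx⟩, ?_⟩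
  -- membership of the iterates in the simplex
  have hmemΔ : ∀ n, 1 ≤ n → φ n ∈ stdSimplex ℝ (Fin M) := by
    intro n hn
    induction n, hn using Nat.le_induction with
    | base => exact hφ1
    | succ n hn ih =>
      have hn' : (0:ℝ) < n := by exact_mod_cast hn
      have h1 : (1:ℝ)/n ≤ 1 := by rw [div_le_one hn']; exact_mod_cast hn
      rw [hupd n hn]
      exact convex_stdSimplex ℝ (Fin M) ih (single_mem_stdSimplex ℝ (idx n))
        (by linarith) (by positivity) (by ring)
  -- every coordinate of a simplex point is in [0,1]
  have hcoord : ∀ x : Fin M → ℝ, x ∈ stdSimplex ℝ (Fin M) → ∀ i, 0 ≤ x i ∧ x i ≤ 1 := by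
    intro x hx i
    refine ⟨hx.1 i, ?_⟩
    have := Finset.single_le_sum (f := x) (fun j _ => hx.1 j) (Finset.mem_univ i)
    rw [hx.2] at this; exact this
  -- gradient inequality from concavity and the Taylor bound
  have hgrad : ∀ x y : Fin M → ℝ, x ∈ stdSimplex ℝ (Fin M) → y ∈ stdSimplex ℝ (Fin M) →
      L y - L x ≤ fderiv ℝ L x (y - x) := by
    intro x y hx hy
    refine le_of_forall_pos_le_add ?_
    intro ε hε
    set N : ℝ := ‖y - x‖ with hN
    have hD0 : (0:ℝ) < b * N ^ 2 + 1 := by positivity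
    set t : ℝ := min 1 (ε / (b * N ^ 2 + 1)) with ht
    have ht0 : 0 < t := lt_min one_pos (by positivity)
    have ht1 : t ≤ 1 := min_le_left _ _
    have htε : t * (b * N ^ 2) ≤ ε := by
      have h1 : t ≤ ε / (b * N ^ 2 + 1) := min_le_right _ _
      have h2 : t * (b * N ^ 2 + 1) ≤ ε := by
        rw [← le_div_iff₀ hD0]; exact h1
      nlinarith [ht0.le]
    have hmem : x + t • (y - x) ∈ stdSimplex ℝ (Fin M) := by
      have h := convex_stdSimplex ℝ (Fin M) hx hy (by linarith : (0:ℝ) ≤ 1 - t) ht0.le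
        (by ring)
      have : x + t • (y - x) = (1 - t) • x + t • y := by module
      rw [this]; exact h
    have hcc : (1 - t) * L x + t * L y ≤ L (x + t • (y - x)) := by
      have h := hconc.2 (Set.mem_univ x) (Set.mem_univ y) (by linarith : (0:ℝ) ≤ 1 - t)
        ht0.le (by ring)
      have he : (1 - t) • x + t • y = x + t • (y - x) := by module
      rw [he] at h
      simpa [smul_eq_mul] using h
    have htay := htaylor x (t • (y - x)) hx hmem
    have hfs : fderiv ℝ L x (t • (y - x)) = t * fderiv ℝ L x (y - x) := by
      rw [map_smul]; rfl
    have hns : ‖t • (y - x)‖ = t * N := by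
      rw [norm_smul, Real.norm_eq_abs, abs_of_pos ht0]
    rw [hfs, hns] at htay
    have hlow := (abs_le.1 htay).2
    have key2 : t * (L y - L x - b * t * N ^ 2) ≤ t * fderiv ℝ L x (y - x) := by
      nlinarith [hcc, hlow]
    have key3 : L y - L x - b * t * N ^ 2 ≤ fderiv ℝ L x (y - x) :=
      le_of_mul_le_mul_left key2 ht0
    nlinarith [key3, htε]
  -- the greedy coordinate dominates any simplex direction
  have hfmax : ∀ n, 1 ≤ n → ∀ x : Fin M → ℝ, x ∈ stdSimplex ℝ (Fin M) →
      fderiv ℝ L (φ n) x ≤ fderiv ℝ L (φ n) (Pi.single (idx n) 1) := by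
    intro n hn x hx
    have hxe : x = ∑ j, x j • (Pi.single j 1 : Fin M → ℝ) := by
      funext i
      simp [Finset.sum_apply, Pi.single_apply, Finset.sum_ite_eq, eq_comm]
    have hsum : fderiv ℝ L (φ n) x = ∑ j, x j * fderiv ℝ L (φ n) (Pi.single j 1) := by
      conv_lhs => rw [hxe]
      rw [map_sum]
      simp [smul_eq_mul]
    rw [hsum]
    calc ∑ j, x j * fderiv ℝ L (φ n) (Pi.single j 1)
        ≤ ∑ j, x j * fderiv ℝ L (φ n) (Pi.single (idx n) 1) :=
          Finset.sum_le_sum (fun j _ => mul_le_mul_of_nonneg_left (hmax n hn j) (hx.1 j))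
      _ = fderiv ℝ L (φ n) (Pi.single (idx n) 1) := by
          rw [← Finset.sum_mul, hx.2, one_mul]
  -- the gap sequence
  obtain ⟨g, hgdef⟩ : ∃ g : ℕ → ℝ, ∀ k, g k = L ψ - L (φ k) := ⟨_, fun _ => rfl⟩
  have hgnonneg : ∀ n, 1 ≤ n → 0 ≤ g n := fun n hn => by
    rw [hgdef]; exact sub_nonneg.2 (hψmax (hmemΔ n hn))
  -- key recursion
  have hrec : ∀ n, 1 ≤ n → g (n+1) ≤ g n - g n / n + b / (n:ℝ)^2 := by
    intro n hn
    have hn' : (0:ℝ) < n := by exact_mod_cast hn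
    set e : Fin M → ℝ := (Pi.single (idx n) 1 : Fin M → ℝ) with he
    set h : Fin M → ℝ := (1/(n:ℝ)) • (e - φ n) with hh
    have hφn1 : φ (n+1) = φ n + h := by
      rw [hupd n hn, hh, he]; module
    have hmem1 : φ n + h ∈ stdSimplex ℝ (Fin M) := hφn1 ▸ hmemΔ (n+1) (by omega)
    have htay := htaylor (φ n) h (hmemΔ n hn) hmem1
    have hnorm : ‖h‖ ≤ 1/(n:ℝ) := by
      rw [hh, norm_smul, Real.norm_eq_abs, abs_of_pos (by positivity : (0:ℝ) < 1/n)]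
      have h1 : ‖e - φ n‖ ≤ 1 := by
        refine (pi_norm_le_iff_of_nonneg zero_le_one).2 (fun i => ?_)
        have h1 := hcoord _ (single_mem_stdSimplex ℝ (idx n)) i
        have h2 := hcoord _ (hmemΔ n hn) i
        rw [Real.norm_eq_abs, abs_le]
        constructor <;> simp only [Pi.sub_apply, he] <;>
          [linarith [h1.1, h2.2]; linarith [h1.2, h2.1]]
      calc (1/(n:ℝ)) * ‖e - φ n‖ ≤ (1/(n:ℝ)) * 1 :=
            mul_le_mul_of_nonneg_left h1 (by positivity)
        _ = 1/(n:ℝ) := mul_one _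
    have hfs : fderiv ℝ L (φ n) h = (1/(n:ℝ)) * fderiv ℝ L (φ n) (e - φ n) := by
      rw [hh, map_smul]; rfl
    have hge : g n ≤ fderiv ℝ L (φ n) (e - φ n) := by
      have h1 : L ψ - L (φ n) ≤ fderiv ℝ L (φ n) (ψ - φ n) := hgrad _ _ (hmemΔ n hn) hψΔ
      have h2 : fderiv ℝ L (φ n) ψ ≤ fderiv ℝ L (φ n) e := hfmax n hn ψ hψΔ
      have h3 : fderiv ℝ L (φ n) (ψ - φ n) = fderiv ℝ L (φ n) ψ - fderiv ℝ L (φ n) (φ n) := by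
        rw [map_sub]
      have h4 : fderiv ℝ L (φ n) (e - φ n) = fderiv ℝ L (φ n) e - fderiv ℝ L (φ n) (φ n) := by
        rw [map_sub]
      rw [hgdef]
      linarith
    have hlow := (abs_le.1 htay).1
    have hsq : ‖h‖^2 ≤ 1/(n:ℝ)^2 := by
      have h5 : ‖h‖ * ‖h‖ ≤ (1/(n:ℝ)) * (1/(n:ℝ)) :=
        mul_le_mul hnorm hnorm (norm_nonneg h) (by positivity)
      calc ‖h‖^2 = ‖h‖ * ‖h‖ := sq ‖h‖
        _ ≤ (1/(n:ℝ)) * (1/(n:ℝ)) := h5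
        _ = 1/(n:ℝ)^2 := by ring
    have hbnd : b * ‖h‖^2 ≤ b / (n:ℝ)^2 := by
      rw [div_eq_mul_inv, ← one_div]
      exact mul_le_mul_of_nonneg_left hsq hb.le
    have hfh : g n / n ≤ fderiv ℝ L (φ n) h := by
      rw [hfs, div_eq_mul_inv, ← one_div, mul_comm]
      exact mul_le_mul_of_nonneg_left hge (by positivity)
    have hL1 : L (φ n) + g n / n - b / (n:ℝ)^2 ≤ L (φ (n+1)) := by
      rw [hφn1]; linarith
    rw [hgdef (n+1), hgdef n]
    rw [hgdef n] at hfh hL1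
    linarith
  -- the gap eventually drops below any positive ε
  have hdrop : ∀ ε : ℝ, 0 < ε → ∀ᶠ n in atTop, g n < ε := by
    intro ε hε
    obtain ⟨N, hNgt⟩ := exists_nat_gt (max 1 (2 * b / ε))
    have hN1 : 1 ≤ N := by
      have := (le_max_left 1 (2 * b / ε)).trans_lt hNgt
      exact_mod_cast this.le
    have hN0 : (0:ℝ) < N := by exact_mod_cast hN1
    have hNb : b / N < ε / 2 := by
      have h1 : 2 * b / ε < N := (le_max_right _ _).trans_lt hNgt
      rw [div_lt_div_iff₀ hN0 two_pos]
      rw [div_lt_iff₀ hε] at h1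
      linarith
    -- small quadratic term for n ≥ N
    have hquad : ∀ n : ℕ, N ≤ n → b / (n:ℝ)^2 ≤ (ε/2) / n := by
      intro n hn
      have hn0 : (0:ℝ) < n := lt_of_lt_of_le hN0 (by exact_mod_cast hn)
      have hNn : (N:ℝ) ≤ n := by exact_mod_cast hn
      rw [div_le_div_iff₀ (by positivity) hn0]
      have h1 : b ≤ ε / 2 * N := by
        have := hNb.le
        rw [div_le_iff₀ hN0] at this
        linarith
      have h2 : b * (n:ℝ) ≤ (ε/2) * N * n := by nlinarith
      have h3 : (ε/2) * (N:ℝ) * n ≤ (ε/2) * n^2 := by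
        nlinarith [mul_le_mul_of_nonneg_left hNn (show (0:ℝ) ≤ ε/2*n by positivity)]
      linarith
    -- once below ε, stays below ε
    have hstay : ∀ n, N ≤ n → g n < ε → g (n+1) < ε := by
      intro n hn hgn
      have hn1 : 1 ≤ n := le_trans hN1 hn
      have hn0 : (0:ℝ) < n := by exact_mod_cast hn1
      have h1 := hrec n hn1
      have h2 := hquad n hn
      have h3 := hgnonneg n hn1
      have e4 : g n - g n / n ≤ ε - ε / n := by
        have h5 : (0:ℝ) ≤ 1 - 1/(n:ℝ) := by
          rw [sub_nonneg, div_le_one hn0]; exact_mod_cast hn1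
        have h6 : g n * (1 - 1/(n:ℝ)) ≤ ε * (1 - 1/(n:ℝ)) :=
          mul_le_mul_of_nonneg_right hgn.le h5
        have h7 : g n - g n / n = g n * (1 - 1/(n:ℝ)) := by ring
        have h8 : ε - ε / n = ε * (1 - 1/(n:ℝ)) := by ring
        rw [h7, h8]; exact h6
      have e6 : 0 < ε / (n:ℝ) := by positivity
      have e7 : ε/2/(n:ℝ) = (ε/(n:ℝ))/2 := by ring
      rw [e7] at h2
      have e8 : ε/(n:ℝ)/2 + ε/(n:ℝ)/2 = ε/(n:ℝ) := by ring
      linarith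
    -- there is some n₀ ≥ N with g n₀ < ε (else the harmonic series would be bounded)
    have hfind : ∃ n₀, N ≤ n₀ ∧ g n₀ < ε := by
      by_contra hcon
      push_neg at hcon
      have hdec : ∀ k : ℕ,
          g (N + k) + (ε/2) * ∑ i ∈ Finset.range k, 1/((N:ℝ) + i) ≤ g N := by
        intro k
        induction k with
        | zero => simp
        | succ k ih =>
          have hk1 : 1 ≤ N + k := by omega
          have hm0 : (0:ℝ) < (N:ℝ) + k := by positivity
          have hεg : ε ≤ g (N + k) := hcon _ (by omega)
          have hq := hquad (N + k) (by omega)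
          have hr := hrec (N + k) hk1
          have hcast : ((N + k : ℕ) : ℝ) = (N:ℝ) + k := by push_cast; ring
          rw [hcast] at hr hq
          rw [Finset.sum_range_succ]
          have hdiv : ε / ((N:ℝ)+k) ≤ g (N+k) / ((N:ℝ)+k) := by gcongr
          have hstep : g (N + (k+1)) ≤ g (N + k) - (ε/2) * (1/((N:ℝ)+k)) := by
            have heq : N + (k+1) = (N+k) + 1 := by omega
            rw [heq]
            have e8 : ε/2/((N:ℝ)+k) = (ε/((N:ℝ)+k))/2 := by ring
            have e9 : (ε/2) * (1/((N:ℝ)+k)) = (ε/((N:ℝ)+k))/2 := by ring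
            rw [e9]
            rw [e8] at hq
            linarith [hdiv, hr, hq]
          linarith [ih, hstep]
      have hub : ∀ k, (∑ i ∈ Finset.range k, (1/((i:ℝ) + 1))) ≤ (N:ℝ) * (2 * g N / ε) := by
        intro k
        have hS0 : (0:ℝ) ≤ ∑ i ∈ Finset.range k, 1/((N:ℝ)+i) :=
          Finset.sum_nonneg (fun i _ => by positivity)
        have h1 : ∑ i ∈ Finset.range k, (1/((i:ℝ)+1))
            ≤ (N:ℝ) * ∑ i ∈ Finset.range k, 1/((N:ℝ)+i) := by
          rw [Finset.mul_sum]
          refine Finset.sum_le_sum (fun i _ => ?_)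
          have hi0 : (0:ℝ) ≤ i := Nat.cast_nonneg i
          rw [mul_one_div, div_le_div_iff₀ (by positivity) (by positivity)]
          nlinarith [hN0, hi0, (by exact_mod_cast hN1 : (1:ℝ) ≤ N)]
        have h2 : (ε/2) * ∑ i ∈ Finset.range k, 1/((N:ℝ)+i) ≤ g N := by
          have hg0 := hgnonneg (N + k) (by omega)
          exact (le_add_of_nonneg_left hg0).trans (hdec k)
        have h3 : ∑ i ∈ Finset.range k, 1/((N:ℝ)+i) ≤ 2 * g N / ε := by
          rw [le_div_iff₀ hε]
          linarith
        calc ∑ i ∈ Finset.range k, (1/((i:ℝ)+1))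
            ≤ (N:ℝ) * ∑ i ∈ Finset.range k, 1/((N:ℝ)+i) := h1
          _ ≤ (N:ℝ) * (2 * g N / ε) := mul_le_mul_of_nonneg_left h3 hN0.le
      obtain ⟨k, hk⟩ :=
        (Real.tendsto_sum_range_one_div_nat_succ_atTop.eventually_ge_atTop
          ((N:ℝ) * (2 * g N / ε) + 1)).exists
      have := hub k
      have hkk : ((N:ℝ) * (2 * g N / ε) + 1) ≤ ∑ i ∈ Finset.range k, (1/((i:ℝ)+1)) := by
        exact_mod_cast hk
      linarith
    obtain ⟨n₀, hn₀N, hn₀⟩ := hfind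
    refine eventually_atTop.2 ⟨n₀, fun n hn => ?_⟩
    induction n, hn using Nat.le_induction with
    | base => exact hn₀
    | succ n hn ih => exact hstay n (le_trans hn₀N hn) ih
  -- conclude
  have hg0 : Tendsto g atTop (nhds 0) := by
    rw [Metric.tendsto_atTop]
    intro ε hε
    obtain ⟨n₁, hn₁⟩ := eventually_atTop.1 (hdrop ε hε)
    refine ⟨max n₁ 1, fun n hn => ?_⟩
    have h1 := hn₁ n (le_trans (le_max_left _ _) hn)
    have h2 := hgnonneg n (le_trans (le_max_right _ _) hn)
    rw [Real.dist_eq, sub_zero, abs_of_nonneg h2]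
    exact h1
  have hfinal : Tendsto (fun n => L ψ - g n) atTop (nhds (L ψ - 0)) :=
    tendsto_const_nhds.sub hg0
  rw [sub_zero] at hfinal
  simpa [hgdef, sub_sub_cancel] using hfinal
end

section
/- For parameters a > 0 and b > 0, let U(r) = c·(1/(1 + e^{−a(r−b)}) − d), where c = (1 + e^{ab})/e^{ab} and d = 1/(1 + e^{ab}). Then U(r) > 0 for all r > 0, and the function r ↦ log U(r) is strictly concave on (0, ∞). -/
open Real Set

/-- The normalized sigmoidal-like utility function is positive on `(0, ∞)`, and its
logarithm is strictly concave on `(0, ∞)`. -/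
theorem stmt_7 (a b : ℝ) (ha : 0 < a) (hb : 0 < b) (c d : ℝ)
    (hc : c = (1 + Real.exp (a * b)) / Real.exp (a * b))
    (hd : d = 1 / (1 + Real.exp (a * b)))
    (U : ℝ → ℝ)
    (hU : ∀ r : ℝ, U r = c * (1 / (1 + Real.exp (-a * (r - b))) - d)) :
    (∀ r : ℝ, 0 < r → 0 < U r) ∧
      StrictConcaveOn ℝ (Set.Ioi (0 : ℝ)) (fun r => Real.log (U r)) := by
  have hE : (0:ℝ) < Real.exp (a * b) := Real.exp_pos _
  -- key simplification: U r = (1 - e^{-ar}) / (1 + e^{ab} e^{-ar})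
  have hexp : ∀ r : ℝ, Real.exp (-a * (r - b)) = Real.exp (a * b) * Real.exp (-(a * r)) := by
    intro r
    rw [← Real.exp_add]
    ring_nf
  have hkey : ∀ r : ℝ, U r =
      (1 - Real.exp (-(a * r))) / (1 + Real.exp (a * b) * Real.exp (-(a * r))) := by
    intro r
    have hs : (0:ℝ) < Real.exp (-(a * r)) := Real.exp_pos _
    have h1 : (0:ℝ) < 1 + Real.exp (a * b) := by positivity
    have h2 : (0:ℝ) < 1 + Real.exp (a * b) * Real.exp (-(a * r)) := by positivity
    rw [hU, hc, hd, hexp]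
    field_simp
    ring
  have hpos : ∀ r : ℝ, 0 < r → 0 < U r := by
    intro r hr
    rw [hkey]
    apply div_pos
    · have : Real.exp (-(a * r)) < 1 := by
        apply Real.exp_lt_one_iff.mpr
        nlinarith
      linarith
    · positivity
  refine ⟨hpos, ?_⟩
  -- f is the simplified log
  set f : ℝ → ℝ := fun r =>
    Real.log (1 - Real.exp (-(a * r))) - Real.log (1 + Real.exp (a * b) * Real.exp (-(a * r)))
    with hf_def
  have hnum : ∀ r : ℝ, 0 < r → 0 < 1 - Real.exp (-(a * r)) := by
    intro r hr
    have : Real.exp (-(a * r)) < 1 := by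
      apply Real.exp_lt_one_iff.mpr
      nlinarith
    linarith
  have hden : ∀ r : ℝ, 0 < 1 + Real.exp (a * b) * Real.exp (-(a * r)) := by
    intro r; positivity
  have hcongr : ∀ r ∈ Set.Ioi (0:ℝ), Real.log (U r) = f r := by
    intro r hr
    rw [hkey, Real.log_div (ne_of_gt (hnum r hr)) (ne_of_gt (hden r))]
  -- derivative of f
  have hderivAt : ∀ r : ℝ, 0 < r → HasDerivAt f
      (a * Real.exp (-(a * r)) / (1 - Real.exp (-(a * r))) +
       a * (Real.exp (a * b) * Real.exp (-(a * r))) /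
         (1 + Real.exp (a * b) * Real.exp (-(a * r)))) r := by
    intro r hr
    have hinner : HasDerivAt (fun r : ℝ => Real.exp (-(a * r))) (-a * Real.exp (-(a * r))) r := by
      have h0 : HasDerivAt (fun r : ℝ => -(a * r)) (-a) r := by
        simpa using ((hasDerivAt_id r).const_mul (-a))
      simpa [mul_comm] using h0.exp
    have h1 : HasDerivAt (fun r : ℝ => 1 - Real.exp (-(a * r))) (a * Real.exp (-(a * r))) r := by
      have := (hasDerivAt_const r (1:ℝ)).sub hinner
      refine this.congr_deriv ?_
      ring
    have h2 : HasDerivAt (fun r : ℝ => 1 + Real.exp (a * b) * Real.exp (-(a * r)))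
        (Real.exp (a * b) * (-a * Real.exp (-(a * r)))) r := by
      have := (hasDerivAt_const r (1:ℝ)).add (hinner.const_mul (Real.exp (a * b)))
      refine this.congr_deriv ?_
      ring
    have h3 := h1.log (ne_of_gt (hnum r hr))
    have h4 := h2.log (ne_of_gt (hden r))
    have := h3.sub h4
    apply this.congr_deriv
    field_simp
    ring
  have hderiv_eq : ∀ r ∈ Set.Ioi (0:ℝ), deriv f r =
      a * Real.exp (-(a * r)) / (1 - Real.exp (-(a * r))) +
      a * (Real.exp (a * b) * Real.exp (-(a * r))) /
        (1 + Real.exp (a * b) * Real.exp (-(a * r))) := by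
    intro r hr
    exact (hderivAt r hr).deriv
  -- simplify derivative to a/(e^{ar}-1) + a/(1+e^{a(r-b)})
  have hderiv_eq2 : ∀ r ∈ Set.Ioi (0:ℝ), deriv f r =
      a / (Real.exp (a * r) - 1) + a / (1 / Real.exp (a * b) * Real.exp (a * r) + 1) := by
    intro r hr
    rw [hderiv_eq r hr]
    have hs : (0:ℝ) < Real.exp (-(a * r)) := Real.exp_pos _
    have hs' : Real.exp (-(a * r)) = 1 / Real.exp (a * r) := by
      rw [Real.exp_neg]; rw [inv_eq_one_div]
    have hgt : (1:ℝ) < Real.exp (a * r) := by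
      have : (0:ℝ) < a * r := mul_pos ha (Set.mem_Ioi.mp hr)
      nlinarith [Real.add_one_le_exp (a * r)]
    have h1 : (0:ℝ) < Real.exp (a * r) - 1 := by linarith
    have h2 : (0:ℝ) < 1 / Real.exp (a * b) * Real.exp (a * r) + 1 := by positivity
    rw [hs']
    have hEr : (0:ℝ) < Real.exp (a * r) := Real.exp_pos _
    field_simp
  have hanti : StrictAntiOn (deriv f) (interior (Set.Ioi (0:ℝ))) := by
    rw [interior_Ioi]
    intro x hx y hy hxy
    rw [hderiv_eq2 x hx, hderiv_eq2 y hy]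
    have hgx : (1:ℝ) < Real.exp (a * x) := by
      have h0 : (0:ℝ) < a * x := by exact mul_pos ha (mem_Ioi.mp hx)
      nlinarith [Real.add_one_le_exp (a * x)]
    have hxy' : Real.exp (a * x) < Real.exp (a * y) := by
      apply Real.exp_lt_exp.mpr
      nlinarith [mem_Ioi.mp hx]
    have h1 : (0:ℝ) < Real.exp (a * x) - 1 := by linarith
    have h2 : (0:ℝ) < 1 / Real.exp (a * b) * Real.exp (a * x) + 1 := by positivity
    have t1 : a / (Real.exp (a * y) - 1) < a / (Real.exp (a * x) - 1) :=
      div_lt_div_of_pos_left ha h1 (by linarith)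
    have t2 : a / (1 / Real.exp (a * b) * Real.exp (a * y) + 1) <
        a / (1 / Real.exp (a * b) * Real.exp (a * x) + 1) := by
      apply div_lt_div_of_pos_left ha h2
      have : (0:ℝ) < 1 / Real.exp (a * b) := by positivity
      nlinarith
    linarith
  have hcont : ContinuousOn f (Set.Ioi (0:ℝ)) := by
    intro r hr
    exact ((hderivAt r hr).differentiableAt.continuousAt).continuousWithinAt
  have hfconc : StrictConcaveOn ℝ (Set.Ioi (0:ℝ)) f :=
    StrictAntiOn.strictConcaveOn_of_deriv (convex_Ioi 0) hcont hanti
  refine ⟨hfconc.1, ?_⟩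
  intro x hx y hy hxy α β hα hβ hαβ
  have hmem : α • x + β • y ∈ Set.Ioi (0:ℝ) := hfconc.1 hx hy hα.le hβ.le hαβ
  simp only
  rw [hcongr x hx, hcongr y hy, hcongr _ hmem]
  exact hfconc.2 hx hy hxy hα hβ hαβ
end

section
/- Let M and Z be positive integers, let H_{i,z} ≥ 0 and c_i ≥ 0 be real constants for i ∈ {1,…,M}, z ∈ {1,…,Z}, and let g_i : ℝ → ℝ be concave differentiable functions. Let F = {φ ∈ ℝ^{M×Z} : φ_{i,z} ≥ 0 for all i, z, and Σ_{i=1}^M φ_{i,z} = 1 for each z}, and let L(φ) = Σ_{i=1}^M g_i(c_i + Σ_{z=1}^Z φ_{i,z}·H_{i,z}). Then φ ∈ F maximizes L over F if and only if for every z ∈ {1,…,Z} and every i with φ_{i,z} > 0, g_i'(c_i + Σ_{z'} φ_{i,z'}·H_{i,z'})·H_{i,z} = max_{1 ≤ m ≤ M} g_m'(c_m + Σ_{z'} φ_{m,z'}·H_{m,z'})·H_{m,z}. -/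
lemma concave_tangent {g : ℝ → ℝ} (hg : ConcaveOn ℝ Set.univ g)
    (hd : Differentiable ℝ g) (x y : ℝ) :
    g y ≤ g x + deriv g x * (y - x) := by
  rcases lt_trichotomy x y with h | h | h
  · have h2 := hg.slope_le_deriv (Set.mem_univ x) (Set.mem_univ y) h (hd x)
    rw [slope_def_field] at h2
    have h' : 0 < y - x := sub_pos.mpr h
    nlinarith [(div_le_iff₀ h').mp h2]
  · simp [h]
  · have h2 := hg.deriv_le_slope (Set.mem_univ y) (Set.mem_univ x) h (hd x)
    rw [slope_def_field] at h2
    have h' : 0 < x - y := sub_pos.mpr h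
    nlinarith [(le_div_iff₀ h').mp h2]

/-- Optimality characterization of the concave scheduling problem: a feasible
scheduling-proportion matrix maximizes `L` over the feasible set iff, on each
resource block, every user scheduled with positive proportion attains the
maximal weighted marginal utility `g_m'(·) * H m z` among all users. -/
theorem stmt_13 (M Z : ℕ) (hM : 0 < M) (hZ : 0 < Z)
    (H : Fin M → Fin Z → ℝ) (hH : ∀ i z, 0 ≤ H i z)
    (c : Fin M → ℝ) (hc : ∀ i, 0 ≤ c i)
    (g : Fin M → ℝ → ℝ)
    (hconc : ∀ i, ConcaveOn ℝ Set.univ (g i))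
    (hdiff : ∀ i, Differentiable ℝ (g i))
    (F : Set (Fin M → Fin Z → ℝ))
    (hF : F = {φ : Fin M → Fin Z → ℝ |
      (∀ i z, 0 ≤ φ i z) ∧ ∀ z, ∑ i, φ i z = 1})
    (L : (Fin M → Fin Z → ℝ) → ℝ)
    (hL : ∀ φ, L φ = ∑ i, g i (c i + ∑ z, φ i z * H i z))
    (φ : Fin M → Fin Z → ℝ) (hφ : φ ∈ F) :
    (∀ ψ ∈ F, L ψ ≤ L φ) ↔
      ∀ z : Fin Z, ∀ i : Fin M, 0 < φ i z →
        deriv (g i) (c i + ∑ z', φ i z' * H i z') * H i z =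
          Finset.univ.sup' (Finset.univ_nonempty_iff.mpr (Fin.pos_iff_nonempty.mp hM))
            (fun m => deriv (g m) (c m + ∑ z', φ m z' * H m z') * H m z) := by
  have ne : (Finset.univ : Finset (Fin M)).Nonempty :=
    Finset.univ_nonempty_iff.mpr (Fin.pos_iff_nonempty.mp hM)
  rw [hF] at hφ
  obtain ⟨hφ1, hφ2⟩ := hφ
  set r : Fin M → ℝ := fun i => c i + ∑ z', φ i z' * H i z' with hr
  set a : Fin M → Fin Z → ℝ := fun i z => deriv (g i) (r i) * H i z with ha
  set S : Fin Z → ℝ := fun w => Finset.univ.sup' ne (fun m => a m w) with hS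
  have haS : ∀ (j : Fin M) (w : Fin Z), a j w ≤ S w :=
    fun j w => Finset.le_sup' (fun m => a m w) (Finset.mem_univ j)
  constructor
  · -- optimality → marginal condition
    intro hmax z i hi
    show a i z = S z
    by_contra hne
    have hlt : a i z < S z := lt_of_le_of_ne (haS i z) hne
    obtain ⟨m, -, hm⟩ := Finset.exists_mem_eq_sup' ne (fun m => a m z)
    have hSz : S z = a m z := by simp only [hS]; exact hm
    have him : i ≠ m := by
      rintro rfl; rw [hSz] at hlt; exact lt_irrefl _ hlt
    -- perturbation direction
    set d : Fin M → ℝ := fun j => if j = i then (-1 : ℝ) else if j = m then 1 else 0 with hd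
    set ψ : ℝ → (Fin M → Fin Z → ℝ) :=
      fun t j w => φ j w + t * (if w = z then d j else 0) with hψ
    have hdsplit : ∀ j : Fin M,
        d j = (if j = i then (-1 : ℝ) else 0) + (if j = m then 1 else 0) := by
      intro j
      by_cases h1 : j = i
      · subst h1; simp [hd, him]
      · by_cases h2 : j = m <;> simp [hd, h1, h2, Ne.symm him]
    have hdzero : ∑ j, d j = 0 := by
      simp only [hdsplit, Finset.sum_add_distrib,
        Finset.sum_ite_eq' Finset.univ i (fun _ => (-1 : ℝ)),
        Finset.sum_ite_eq' Finset.univ m (fun _ => (1 : ℝ))]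
      simp
    -- rates along the perturbation
    have hrate : ∀ t (j : Fin M),
        c j + ∑ w, ψ t j w * H j w = r j + t * (d j * H j z) := by
      intro t j
      simp only [hψ, add_mul, Finset.sum_add_distrib, ite_mul, zero_mul, mul_ite, mul_zero]
      rw [Finset.sum_ite_eq' Finset.univ z (fun w => t * d j * H j w)]
      simp only [Finset.mem_univ, if_true, hr]
      ring
    -- feasibility of the perturbation for 0 ≤ t ≤ φ i z
    have hfeas : ∀ t, 0 ≤ t → t ≤ φ i z → ψ t ∈ F := by
      intro t ht0 ht1
      rw [hF]
      constructor
      · intro j w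
        by_cases hw : w = z
        · subst hw
          by_cases h1 : j = i
          · subst h1; simp [hψ, hd]; linarith
          · by_cases h2 : j = m
            · subst h2
              have := hφ1 j w
              simp [hψ, hd, h1]
              linarith
            · simpa [hψ, hd, h1, h2] using hφ1 j w
        · simpa [hψ, hw] using hφ1 j w
      · intro w
        by_cases hw : w = z
        · subst hw
          have hsum : ∑ j, (φ j w + t * d j) = 1 := by
            rw [Finset.sum_add_distrib, hφ2 w, ← Finset.mul_sum, hdzero, mul_zero, add_zero]
          simpa [hψ] using hsum
        · simp [hψ, hw, hφ2 w]
    -- the objective along the perturbation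
    set f : ℝ → ℝ := fun t => ∑ j, g j (r j + t * (d j * H j z)) with hf
    have hLψ : ∀ t, L (ψ t) = f t := by
      intro t
      rw [hL]
      exact Finset.sum_congr rfl fun j _ => by rw [hrate]
    have hf0 : f 0 = L φ := by
      rw [hL]
      exact Finset.sum_congr rfl fun j _ => by simp [hr]
    -- derivative of f at 0
    set D : ℝ := ∑ j, deriv (g j) (r j) * (d j * H j z) with hD
    have hfD : HasDerivAt f D 0 := by
      apply HasDerivAt.fun_sum
      intro j _
      have inner : HasDerivAt (fun t : ℝ => r j + t * (d j * H j z)) (d j * H j z) 0 :=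
        (hasDerivAt_mul_const (d j * H j z)).const_add (r j)
      have outer := ((hdiff j) (r j + 0 * (d j * H j z))).hasDerivAt
      have := outer.comp 0 inner
      simpa [Function.comp_def] using this
    have hDval : D = a m z - a i z := by
      rw [hD]
      have : ∀ j : Fin M, deriv (g j) (r j) * (d j * H j z) =
          (if j = i then -(a i z) else 0) + (if j = m then a m z else 0) := by
        intro j
        by_cases h1 : j = i
        · subst h1; simp [hd, him, ha]
        · by_cases h2 : j = m <;> simp [hd, h1, h2, Ne.symm him, ha]
      simp only [this, Finset.sum_add_distrib,
        Finset.sum_ite_eq' Finset.univ i (fun _ => -(a i z)),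
        Finset.sum_ite_eq' Finset.univ m (fun _ => a m z)]
      simp; ring
    have hDpos : 0 < D := by rw [hDval, ← hSz]; linarith
    -- find a small positive feasible step with f t > f 0
    have hslope : Filter.Tendsto (slope f 0) (nhdsWithin 0 {(0:ℝ)}ᶜ) (nhds D) :=
      hasDerivAt_iff_tendsto_slope.mp hfD
    have hmono : nhdsWithin (0:ℝ) (Set.Ioi 0) ≤ nhdsWithin 0 {(0:ℝ)}ᶜ :=
      nhdsWithin_mono 0 (fun x hx => ne_of_gt hx)
    have hev1 : ∀ᶠ t in nhdsWithin (0:ℝ) (Set.Ioi 0), 0 < slope f 0 t :=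
      (hslope.mono_left hmono).eventually (eventually_gt_nhds hDpos)
    have hev2 : ∀ᶠ t in nhdsWithin (0:ℝ) (Set.Ioi 0), t ∈ Set.Ioc 0 (φ i z) :=
      Filter.eventually_of_mem (Ioc_mem_nhdsGT_of_mem ⟨le_rfl, hi⟩) (fun _ h => h)
    obtain ⟨t, hts, ht0, ht1⟩ := (hev1.and hev2).exists
    have hft : f 0 < f t := by
      have hsl : slope f 0 t = (f t - f 0) / t := by rw [slope_def_field]; ring_nf
      rw [hsl] at hts
      have h := mul_pos hts ht0
      rw [div_mul_cancel₀ _ (ne_of_gt ht0)] at h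
      linarith
    have := hmax (ψ t) (hfeas t ht0.le ht1)
    rw [hLψ, ← hf0] at this
    linarith
  · -- marginal condition → optimality
    intro hcond ψ hψ
    rw [hF] at hψ
    obtain ⟨hψ1, hψ2⟩ := hψ
    rw [hL, hL]
    set y : Fin M → ℝ := fun j => c j + ∑ w, ψ j w * H j w with hy
    have tangent : ∀ j : Fin M, g j (y j) ≤ g j (r j) + deriv (g j) (r j) * (y j - r j) :=
      fun j => concave_tangent (hconc j) (hdiff j) (r j) (y j)
    have expand : ∀ j : Fin M, deriv (g j) (r j) * (y j - r j) =
        ∑ w, (ψ j w - φ j w) * a j w := by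
      intro j
      have h1 : y j - r j = ∑ w, (ψ j w - φ j w) * H j w := by
        simp only [hy, hr, sub_mul, Finset.sum_sub_distrib]
        ring
      rw [h1, Finset.mul_sum]
      exact Finset.sum_congr rfl fun w _ => by simp only [ha]; ring
    have key : ∑ j, deriv (g j) (r j) * (y j - r j) ≤ 0 := by
      have perw : ∀ w ∈ (Finset.univ : Finset (Fin Z)),
          ∑ j, (ψ j w - φ j w) * a j w ≤ 0 := by
        intro w _
        have h1 : ∑ j, ψ j w * a j w ≤ S w :=
          calc ∑ j, ψ j w * a j w ≤ ∑ j, ψ j w * S w :=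
                Finset.sum_le_sum fun j _ =>
                  mul_le_mul_of_nonneg_left (haS j w) (hψ1 j w)
            _ = S w := by rw [← Finset.sum_mul, hψ2 w, one_mul]
        have h2 : ∑ j, φ j w * a j w = S w := by
          have : ∀ j ∈ (Finset.univ : Finset (Fin M)),
              φ j w * a j w = φ j w * S w := by
            intro j _
            rcases eq_or_lt_of_le (hφ1 j w) with h | h
            · rw [← h]; ring
            · have haSw : a j w = S w := hcond w j h
              rw [haSw]
          rw [Finset.sum_congr rfl this, ← Finset.sum_mul, hφ2 w, one_mul]
        calc ∑ j, (ψ j w - φ j w) * a j w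
            = ∑ j, ψ j w * a j w - ∑ j, φ j w * a j w := by
              simp only [sub_mul, Finset.sum_sub_distrib]
          _ ≤ S w - S w := by rw [h2]; exact sub_le_sub_right h1 _
          _ = 0 := sub_self _
      calc ∑ j, deriv (g j) (r j) * (y j - r j)
          = ∑ j, ∑ w, (ψ j w - φ j w) * a j w :=
            Finset.sum_congr rfl fun j _ => expand j
        _ = ∑ w, ∑ j, (ψ j w - φ j w) * a j w := Finset.sum_comm
        _ ≤ ∑ _w : Fin Z, (0:ℝ) := Finset.sum_le_sum perw
        _ = 0 := by simp
    calc ∑ j, g j (y j) ≤ ∑ j, (g j (r j) + deriv (g j) (r j) * (y j - r j)) :=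
            Finset.sum_le_sum fun j _ => tangent j
      _ = ∑ j, g j (r j) + ∑ j, deriv (g j) (r j) * (y j - r j) := Finset.sum_add_distrib
      _ ≤ ∑ j, g j (r j) := by linarith
end
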